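/- Let (X,d) be a metric space and F = {f_1,…,f_r} ⊂ Isom(X) a set of r isometries of X such that d_∞(g,h) < ∞ for all g,h in the semigroup ⟨F⟩ generated by F. Assume: (1) the semigroup ⟨F⟩ is free on the generators f_1,…,f_r (no relations among positive words); and (2) there exist x* ∈ X and c > 0 such that for all u,v ∈ ⟨F⟩, d(u(x*), v(x*)) ≥ c·dist_word(u,v), where dist_word is the combinatorial word distance on the free semigroup. Then for every k and every ε < c/2, N(B(k,F), d_∞, ε) ≥ r^k. -/
import Mathlib


open scoped ENNReal NNReal

/-- Uniform (sup) extended distance between two maps. -/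
noncomputable def eUnifDist {X Y : Type*} [PseudoEMetricSpace Y] (f g : X → Y) : ℝ≥0∞ :=
  ⨆ x, edist (f x) (g x)

/-- `ε`-covering number of a set `A` with respect to an `ℝ≥0∞`-valued pseudometric `ρ`. -/
noncomputable def eCovNum {α : Type*} (ρ : α → α → ℝ≥0∞) (A : Set α) (ε : ℝ≥0∞) : ℝ≥0∞ :=
  ⨅ (C : Finset α) (_ : ∀ a ∈ A, ∃ c ∈ C, ρ a c ≤ ε), (C.card : ℝ≥0∞)

/-- Word ball `B(k,F)`. -/
def wordBall {X : Type*} (k : ℕ) (F : Set (X → X)) : Set (X → X) :=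
  {g | ∃ l : List (X → X), l.length ≤ k ∧ (∀ f ∈ l, f ∈ F) ∧ g = l.foldr (· ∘ ·) id}

/-- Composition of a word (list of generator indices, applied first-to-last). -/
def listComp {X : Type*} {r : ℕ} (f : Fin r → X → X) (u : List (Fin r)) : X → X :=
  (u.map f).foldr (· ∘ ·) id

/-- Length of the longest common prefix of two words. -/
def commonPrefixLen {ι : Type*} [DecidableEq ι] : List ι → List ι → ℕ
  | a :: u, b :: v => if a = b then commonPrefixLen u v + 1 else 0
  | _, _ => 0

/-- Combinatorial word distance on the free semigroup on `ι`. -/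
def wordDist {ι : Type*} [DecidableEq ι] (u v : List ι) : ℕ :=
  u.length + v.length - 2 * commonPrefixLen u v


lemma cpl_lt_length {ι : Type*} [DecidableEq ι] :
    ∀ u v : List ι, u.length = v.length → u ≠ v → commonPrefixLen u v < u.length := by
  intro u
  induction u with
  | nil => intro v h hne; cases v with
    | nil => exact absurd rfl hne
    | cons b v => simp at h
  | cons a u ih =>
    intro v h hne
    cases v with
    | nil => simp at h
    | cons b v =>
      by_cases hab : a = b
      · subst hab
        have hne' : u ≠ v := fun e => hne (by rw [e])
        have := ih v (by simpa using h) hne'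
        simp [commonPrefixLen]
        omega
      · simp [commonPrefixLen, hab]

lemma eUnifDist_comm {X Y : Type*} [PseudoEMetricSpace Y] (f g : X → Y) :
    eUnifDist f g = eUnifDist g f := by
  simp [eUnifDist, edist_comm]

lemma eUnifDist_triangle {X Y : Type*} [PseudoEMetricSpace Y] (f g h : X → Y) :
    eUnifDist f h ≤ eUnifDist f g + eUnifDist g h := by
  refine iSup_le fun x => le_trans (edist_triangle _ (g x) _) ?_
  exact add_le_add (le_iSup (fun x => edist (f x) (g x)) x)
    (le_iSup (fun x => edist (g x) (h x)) x)

/-- **Condition E1' (free isometric semigroup with coarse coding grows exponentially).** -/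
theorem stmt8 {X : Type*} [MetricSpace X] (r : ℕ)
    (f : Fin r → X → X) (hiso : ∀ i, Isometry (f i)) (hbij : ∀ i, Function.Bijective (f i))
    (hfin : ∀ u v : List (Fin r), u ≠ [] → v ≠ [] →
      eUnifDist (listComp f u) (listComp f v) < ⊤)
    (hfree : ∀ u v : List (Fin r), u ≠ [] → v ≠ [] →
      listComp f u = listComp f v → u = v)
    (xs : X) (c : ℝ) (hc : 0 < c)
    (hcoarse : ∀ u v : List (Fin r), u ≠ [] → v ≠ [] →
      c * (wordDist u v : ℝ) ≤ dist (listComp f u xs) (listComp f v xs)) :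
    ∀ (k : ℕ) (ε : ℝ), ε < c / 2 →
      (r : ℝ≥0∞) ^ k ≤ eCovNum eUnifDist (wordBall k (Set.range f)) (ENNReal.ofReal ε) := by
  intro k ε hε
  rw [eCovNum]
  refine le_iInf fun C => le_iInf fun hC => ?_
  set φ : (Fin k → Fin r) → (X → X) := fun w => listComp f (List.ofFn w) with hφ
  have hφmem : ∀ w, φ w ∈ wordBall k (Set.range f) := by
    intro w
    refine ⟨(List.ofFn w).map f, by simp, ?_, rfl⟩
    intro g hg
    simp only [List.mem_map] at hg
    obtain ⟨i, _, rfl⟩ := hg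
    exact ⟨i, rfl⟩
  choose ψ hψmem hψdist using fun w => hC (φ w) (hφmem w)
  have hinj : Function.Injective ψ := by
    intro w₁ w₂ hψeq
    by_contra hne
    have hlne : List.ofFn w₁ ≠ List.ofFn w₂ := fun h => hne (List.ofFn_injective h)
    have hk : 0 < k := by
      rcases Nat.eq_zero_or_pos k with h0 | h0
      · subst h0
        exact (hne (funext fun i => absurd i.isLt (by omega))).elim
      · exact h0
    have hne1 : List.ofFn w₁ ≠ [] := by
      simp [← List.length_eq_zero_iff]; omega
    have hne2 : List.ofFn w₂ ≠ [] := by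
      simp [← List.length_eq_zero_iff]; omega
    have hlenw : (List.ofFn w₁).length = (List.ofFn w₂).length := by simp
    have hcpl := cpl_lt_length (List.ofFn w₁) (List.ofFn w₂) hlenw hlne
    have hwd : 2 ≤ wordDist (List.ofFn w₁) (List.ofFn w₂) := by
      unfold wordDist
      have h1 : (List.ofFn w₁).length = k := by simp
      have h2 : (List.ofFn w₂).length = k := by simp
      omega
    have hd : 2 * c ≤ dist (φ w₁ xs) (φ w₂ xs) := by
      refine le_trans ?_ (hcoarse _ _ hne1 hne2)
      have : (2 : ℝ) ≤ (wordDist (List.ofFn w₁) (List.ofFn w₂) : ℝ) := by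
        exact_mod_cast hwd
      nlinarith
    have hE : ENNReal.ofReal (2 * c) ≤ eUnifDist (φ w₁) (φ w₂) := by
      refine le_trans ?_ (le_iSup (fun x => edist (φ w₁ x) (φ w₂ x)) xs)
      rw [edist_dist]
      exact ENNReal.ofReal_le_ofReal hd
    have htri : eUnifDist (φ w₁) (φ w₂) ≤
        ENNReal.ofReal ε + ENNReal.ofReal ε := by
      refine le_trans (eUnifDist_triangle (φ w₁) (ψ w₁) (φ w₂)) ?_
      refine add_le_add (hψdist w₁) ?_
      rw [eUnifDist_comm]
      rw [hψeq]
      exact hψdist w₂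
    have hlt : ENNReal.ofReal ε + ENNReal.ofReal ε < ENNReal.ofReal (2 * c) := by
      rcases le_or_gt ε 0 with h0 | h0
      · rw [ENNReal.ofReal_eq_zero.mpr h0]
        simpa using ENNReal.ofReal_pos.mpr (by linarith : (0:ℝ) < 2 * c)
      · rw [← ENNReal.ofReal_add h0.le h0.le,
          ENNReal.ofReal_lt_ofReal_iff (by linarith)]
        linarith
    exact absurd (le_trans hE htri) (not_le.mpr hlt)
  have hcard : r ^ k ≤ C.card := by
    have : Fintype.card (Fin k → Fin r) ≤ Fintype.card {x // x ∈ C} :=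
      Fintype.card_le_of_injective (fun w => ⟨ψ w, hψmem w⟩)
        (fun w₁ w₂ h => hinj (by simpa using congrArg Subtype.val h))
    simpa [Fintype.card_fun] using this
  calc (r : ℝ≥0∞) ^ k = ((r ^ k : ℕ) : ℝ≥0∞) := by push_cast; ring
    _ ≤ (C.card : ℝ≥0∞) := Nat.cast_le.mpr hcard
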